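/- The function x ↦ ν(x)·(ν(x) − x)² is strictly decreasing on (0, ∞), where ν = 1/V_0. Consequently sup_{x≥0} (ν'(x))²/(4ν(x)) = ν(0)³ = π^{-3/2}. -/

import Mathlib

open Real Set MeasureTheory Filter

noncomputable def V0 (x : ℝ) : ℝ := 2 * Real.exp (x^2) * ∫ t in Set.Ioi x, Real.exp (-t^2)

noncomputable def nu (x : ℝ) : ℝ := 1 / V0 x

noncomputable def Eg (x : ℝ) : ℝ := ∫ t in Set.Ioi x, Real.exp (-t^2)

lemma integrable_g : Integrable (fun t : ℝ => Real.exp (-t^2)) := by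
  have := integrable_exp_neg_mul_sq (b := 1) one_pos
  simpa using this

lemma Eg_pos (x : ℝ) : 0 < Eg x := by
  rw [Eg]
  apply setIntegral_pos_iff_support_of_nonneg_ae ?_ (integrable_g.integrableOn) |>.2
  · have : (Function.support fun t : ℝ => Real.exp (-t^2)) = univ := by
      ext t; simp [Function.support, Real.exp_ne_zero]
    rw [this]
    simp [Measure.restrict_apply, MeasurableSet.univ]
  · filter_upwards with t using (Real.exp_pos _).le

lemma Eg_split {a b : ℝ} (h : a ≤ b) :
    Eg a = (∫ t in a..b, Real.exp (-t^2)) + Eg b := by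
  rw [Eg, Eg, intervalIntegral.integral_of_le h,
    ← setIntegral_union (Set.Ioc_disjoint_Ioi le_rfl) measurableSet_Ioi
      integrable_g.integrableOn integrable_g.integrableOn,
    Set.Ioc_union_Ioi_eq_Ioi h]

lemma Eg_eq (x : ℝ) : Eg x = Eg 0 - ∫ t in (0:ℝ)..x, Real.exp (-t^2) := by
  rcases le_or_gt 0 x with h | h
  · rw [Eg_split h]; ring
  · rw [Eg_split h.le, intervalIntegral.integral_symm]; ring

lemma hasDerivAt_Eg (x : ℝ) : HasDerivAt Eg (-(Real.exp (-x^2))) x := by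
  have h1 : HasDerivAt (fun x => ∫ t in (0:ℝ)..x, Real.exp (-t^2)) (Real.exp (-x^2)) x := by
    apply intervalIntegral.integral_hasDerivAt_right
      (integrable_g.intervalIntegrable)
      integrable_g.aestronglyMeasurable.stronglyMeasurableAtFilter
    exact (Real.continuous_exp.comp (by continuity)).continuousAt
  have : HasDerivAt (fun x => Eg 0 - ∫ t in (0:ℝ)..x, Real.exp (-t^2)) (-(Real.exp (-x^2))) x := by
    have h := (hasDerivAt_const x (Eg 0)).sub h1
    simp at h
    exact h
  exact this.congr_of_eventuallyEq (Filter.Eventually.of_forall fun y => Eg_eq y)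

lemma Eg_tendsto : Tendsto Eg atTop (nhds 0) := by
  have h := intervalIntegral_tendsto_integral_Ioi (μ := volume) 0
    (integrable_g.integrableOn (s := Set.Ioi 0)) tendsto_id
  have : Tendsto (fun x => Eg 0 - ∫ t in (0:ℝ)..x, Real.exp (-t^2)) atTop (nhds (Eg 0 - Eg 0)) :=
    tendsto_const_nhds.sub h
  rw [sub_self] at this
  exact this.congr (fun y => (Eg_eq y).symm)

lemma Eg_zero : Eg 0 = Real.sqrt Real.pi / 2 := by
  have := integral_gaussian_Ioi 1
  simp only [one_mul, div_one] at this
  rw [Eg]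
  simpa using this
lemma V0_eq (x : ℝ) : V0 x = 2 * Real.exp (x^2) * Eg x := rfl

lemma V0_pos (x : ℝ) : 0 < V0 x := by
  rw [V0_eq]
  have := Eg_pos x
  positivity

lemma nu_pos (x : ℝ) : 0 < nu x := by
  rw [nu]; exact div_pos one_pos (V0_pos x)

lemma hasDerivAt_V0 (x : ℝ) : HasDerivAt V0 (2 * x * V0 x - 2) x := by
  have h1 : HasDerivAt (fun x : ℝ => 2 * Real.exp (x^2)) (2 * (2*x) * Real.exp (x^2)) x := by
    have hx : HasDerivAt (fun x : ℝ => x^2) (2*x) x := by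
      simpa using hasDerivAt_pow 2 x
    have := (hx.exp).const_mul 2
    refine this.congr_deriv ?_; ring
  have h := h1.mul (hasDerivAt_Eg x)
  have heq : (fun x => 2 * Real.exp (x^2) * Eg x) = V0 := rfl
  rw [show (fun x : ℝ => 2 * Real.exp (x^2)) * Eg = V0 from heq] at h
  refine h.congr_deriv ?_
  rw [V0_eq]
  have : Real.exp (x^2) * Real.exp (-x^2) = 1 := by
    rw [← Real.exp_add]; simp
  nlinarith [this]

lemma hasDerivAt_nu (x : ℝ) : HasDerivAt nu (2 * nu x * (nu x - x)) x := by
  have h := ((hasDerivAt_V0 x).inv (V0_pos x).ne')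
  have heq : (fun x => (V0 x)⁻¹) = nu := by
    funext y; rw [nu, one_div]
  rw [show V0⁻¹ = nu from heq] at h
  refine h.congr_deriv ?_
  have hnu : nu x = (V0 x)⁻¹ := by rw [nu, one_div]
  rw [hnu]
  have h0 := (V0_pos x).ne'
  field_simp
  ring

lemma deriv_nu (x : ℝ) : deriv nu x = 2 * nu x * (nu x - x) := (hasDerivAt_nu x).deriv

lemma nu_zero : nu 0 = (Real.sqrt Real.pi)⁻¹ := by
  rw [nu, V0_eq]
  show (1 : ℝ) / (2 * Real.exp (0^2) * Eg 0) = _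
  rw [Eg_zero]
  norm_num
lemma pos_of_tendsto_zero {φ : ℝ → ℝ} {x : ℝ}
    (hcont : ContinuousOn φ (Ici x))
    (hderiv : ∀ y ∈ Ioi x, deriv φ y < 0)
    (hlim : Tendsto φ atTop (nhds 0)) : 0 < φ x := by
  have hanti : StrictAntiOn φ (Ici x) :=
    strictAntiOn_of_deriv_neg (convex_Ici x) hcont (by rwa [interior_Ici])
  have h1 : (0:ℝ) ≤ φ (x+1) := by
    apply le_of_tendsto hlim
    filter_upwards [eventually_ge_atTop (x+1)] with y hy
    rcases eq_or_lt_of_le hy with h | h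
    · exact h ▸ le_rfl
    · exact (hanti (by simp only [mem_Ici]; linarith) (by simp only [mem_Ici]; linarith) h).le
  have h2 : φ (x+1) < φ x := hanti self_mem_Ici (by simp [mem_Ici]) (lt_add_one x)
  linarith

lemma hlimexp : Tendsto (fun y : ℝ => Real.exp (-y^2)) atTop (nhds 0) := by
  apply Real.tendsto_exp_atBot.comp
  apply tendsto_neg_atTop_atBot.comp
  exact tendsto_pow_atTop two_ne_zero

-- ν(x) > x for x > 0, i.e. Eg x < exp(-x²)/(2x)
lemma Eg_lt (x : ℝ) (hx : 0 < x) : Eg x < Real.exp (-x^2) / (2*x) := by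
  set ψ : ℝ → ℝ := fun y => Real.exp (-y^2) / (2*y) - Eg y with hψ
  have hd : ∀ y, 0 < y → HasDerivAt ψ (-(Real.exp (-y^2) / (2*y^2))) y := by
    intro y hy
    have he : HasDerivAt (fun y : ℝ => Real.exp (-y^2)) (-(2*y) * Real.exp (-y^2)) y := by
      have h2 : HasDerivAt (fun y : ℝ => -y^2) (-(2*y)) y := by
        have h := (hasDerivAt_pow 2 y).neg
        simp at h
        exact h
      simpa [mul_comm] using h2.exp
    have hv : HasDerivAt (fun y : ℝ => 2*y) 2 y := by
      simpa using (hasDerivAt_id y).const_mul 2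
    have := (he.div hv (by positivity)).sub (hasDerivAt_Eg y)
    refine this.congr_deriv ?_
    field_simp
    ring
  have key : 0 < ψ x := by
    apply pos_of_tendsto_zero (φ := ψ)
    · intro y hy
      exact ((hd y (lt_of_lt_of_le hx hy)).continuousAt).continuousWithinAt
    · intro y hy
      rw [(hd y (hx.trans hy)).deriv]
      have hy0 : y ≠ 0 := (hx.trans hy).ne'
      have : 0 < Real.exp (-y^2) / (2*y^2) := by positivity
      linarith
    · have h1 : Tendsto (fun y : ℝ => Real.exp (-y^2) / (2*y)) atTop (nhds 0) := by
        have h2 : Tendsto (fun y : ℝ => (2*y)⁻¹) atTop (nhds 0) := by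
          apply tendsto_inv_atTop_zero.comp
          exact (tendsto_id.const_mul_atTop two_pos)
        have := hlimexp.mul h2
        simpa [div_eq_mul_inv] using this
      simpa using h1.sub Eg_tendsto
  rw [hψ] at key
  simp only at key
  linarith
noncomputable def Ub (y : ℝ) : ℝ := (2*y + Real.sqrt (y^2+3)) / 3

lemma sqrt_pos' (y : ℝ) : 0 < Real.sqrt (y^2+3) := Real.sqrt_pos.2 (by positivity)

lemma sqrt_sq' (y : ℝ) : (Real.sqrt (y^2+3))^2 = y^2+3 := Real.sq_sqrt (by positivity)

lemma Ub_pos {y : ℝ} (hy : 0 < y) : 0 < Ub y := by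
  have := sqrt_pos' y; rw [Ub]; positivity

lemma hasDerivAt_Ub (y : ℝ) :
    HasDerivAt Ub ((2 + y / Real.sqrt (y^2+3)) / 3) y := by
  have h1 : HasDerivAt (fun y : ℝ => y^2+3) (2*y) y := by
    simpa using (hasDerivAt_pow 2 y).add_const 3
  have h2 : HasDerivAt (fun y : ℝ => Real.sqrt (y^2+3))
      (2*y / (2 * Real.sqrt (y^2+3))) y := by
    have := (Real.hasDerivAt_sqrt (ne_of_gt (by positivity : (0:ℝ) < y^2+3))).comp y h1
    refine this.congr_deriv ?_
    field_simp
  have h3 : HasDerivAt (fun y : ℝ => 2*y) 2 y := by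
    simpa using (hasDerivAt_id y).const_mul 2
  have := (h3.add h2).div_const 3
  refine this.congr_deriv ?_
  have hs := (sqrt_pos' y).ne'
  field_simp

-- key: ν(x) < Ub x, i.e. Eg x > exp(-x²)/(2 * Ub x)
lemma Eg_gt (x : ℝ) (hx : 0 < x) : Real.exp (-x^2) / (2 * Ub x) < Eg x := by
  set φ : ℝ → ℝ := fun y => Eg y - Real.exp (-y^2) / (2 * Ub y) with hφ
  have hd : ∀ y, 0 < y → HasDerivAt φ
      (Real.exp (-y^2) * ((2*y*Ub y + (2 + y / Real.sqrt (y^2+3)) / 3 - 2*(Ub y)^2))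
        / (2 * (Ub y)^2)) y := by
    intro y hy
    have he : HasDerivAt (fun y : ℝ => Real.exp (-y^2)) (-(2*y) * Real.exp (-y^2)) y := by
      have h2 : HasDerivAt (fun y : ℝ => -y^2) (-(2*y)) y := by
        have h := (hasDerivAt_pow 2 y).neg
        simp at h
        exact h
      simpa [mul_comm] using h2.exp
    have hv : HasDerivAt (fun y : ℝ => 2 * Ub y) (2 * ((2 + y / Real.sqrt (y^2+3)) / 3)) y :=
      (hasDerivAt_Ub y).const_mul 2
    have hU := Ub_pos hy
    have := (hasDerivAt_Eg y).sub (he.div hv (by positivity))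
    refine this.congr_deriv ?_
    field_simp
    ring
  have hderiv_neg : ∀ y, 0 < y → 2*y*Ub y + (2 + y / Real.sqrt (y^2+3)) / 3 - 2*(Ub y)^2 < 0 := by
    intro y hy
    set s := Real.sqrt (y^2+3) with hs
    have hs0 : 0 < s := sqrt_pos' y
    have hs2 : s^2 = y^2+3 := sqrt_sq' y
    have hys : y < s := by nlinarith
    have hU : Ub y = (2*y+s)/3 := rfl
    rw [hU]
    have key : 2*y*(s - y) < 3 := by nlinarith
    have h0 : s ≠ 0 := hs0.ne'
    have expand : (2*y*((2*y+s)/3) + (2 + y/s)/3 - 2*((2*y+s)/3)^2) * (9*s)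
        = y*(2*y*s - 2*y^2 - 3) := by
      field_simp
      linear_combination (-18*(y+s)) * hs2
    have hprod : (2*y*((2*y+s)/3) + (2 + y/s)/3 - 2*((2*y+s)/3)^2) * (9*s) < 0 := by
      rw [expand]
      have h5 : 2*y*s - 2*y^2 - 3 < 0 := by nlinarith
      nlinarith
    by_contra hcon
    push_neg at hcon
    have : 0 ≤ (2*y*((2*y+s)/3) + (2 + y/s)/3 - 2*((2*y+s)/3)^2) * (9*s) :=
      mul_nonneg hcon (by positivity)
    linarith
  have key : 0 < φ x := by
    apply pos_of_tendsto_zero (φ := φ)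
    · intro y hy
      exact ((hd y (lt_of_lt_of_le hx hy)).continuousAt).continuousWithinAt
    · intro y hy
      have hy0 := hx.trans hy
      rw [(hd y hy0).deriv]
      have hU := Ub_pos hy0
      have hneg := hderiv_neg y hy0
      have he := Real.exp_pos (-y^2)
      apply div_neg_of_neg_of_pos
      · exact mul_neg_of_pos_of_neg he hneg
      · positivity
    · have h1 : Tendsto (fun y : ℝ => Real.exp (-y^2) / (2 * Ub y)) atTop (nhds 0) := by
        have hU_top : Tendsto Ub atTop atTop := by
          apply tendsto_atTop_mono (fun y => ?_) (tendsto_id.atTop_mul_const (by norm_num : (0:ℝ) < 2/3))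
          rw [Ub]
          have := Real.sqrt_nonneg (y^2+3)
          simp only [id]
          linarith
        have h2 : Tendsto (fun y : ℝ => (2 * Ub y)⁻¹) atTop (nhds 0) :=
          tendsto_inv_atTop_zero.comp (hU_top.const_mul_atTop two_pos)
        have := hlimexp.mul h2
        simpa [div_eq_mul_inv] using this
      simpa using Eg_tendsto.sub h1
  rw [hφ] at key
  simp only at key
  linarith
lemma nu_gt (x : ℝ) (hx : 0 < x) : x < nu x := by
  have h := Eg_lt x hx
  have hE := Eg_pos x
  have hee : Real.exp (x^2) * Real.exp (-x^2) = 1 := by rw [← Real.exp_add]; simp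
  have hex := Real.exp_pos (x^2)
  have h3 : x * (2 * Real.exp (x^2) * (Real.exp (-x^2)/(2*x)))
      = Real.exp (x^2) * Real.exp (-x^2) := by
    field_simp
  have key : x * V0 x < 1 := by
    rw [V0_eq]
    have h2 : x * (2 * Real.exp (x^2) * Eg x)
        < x * (2 * Real.exp (x^2) * (Real.exp (-x^2)/(2*x))) := by
      apply mul_lt_mul_of_pos_left _ hx
      exact mul_lt_mul_of_pos_left h (by positivity)
    rw [h3, hee] at h2
    exact h2
  rw [nu, lt_div_iff₀ (V0_pos x)]
  exact key

lemma nu_lt (x : ℝ) (hx : 0 < x) : nu x < Ub x := by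
  have h := Eg_gt x hx
  have hU := Ub_pos hx
  have hee : Real.exp (x^2) * Real.exp (-x^2) = 1 := by rw [← Real.exp_add]; simp
  have hex := Real.exp_pos (x^2)
  have h3 : Ub x * (2 * Real.exp (x^2) * (Real.exp (-x^2)/(2 * Ub x)))
      = Real.exp (x^2) * Real.exp (-x^2) := by
    field_simp
  have key : 1 < Ub x * V0 x := by
    rw [V0_eq]
    have h2 : Ub x * (2 * Real.exp (x^2) * (Real.exp (-x^2)/(2 * Ub x)))
        < Ub x * (2 * Real.exp (x^2) * Eg x) := by
      apply mul_lt_mul_of_pos_left _ hU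
      exact mul_lt_mul_of_pos_left h (by positivity)
    rw [h3, hee] at h2
    exact h2
  rw [nu, div_lt_iff₀ (V0_pos x)]
  exact key

lemma hasDerivAt_f (x : ℝ) :
    HasDerivAt (fun x => nu x * (nu x - x)^2)
      (2 * nu x * (nu x - x) * (3*(nu x)^2 - 4*(nu x)*x + x^2 - 1)) x := by
  have h1 := hasDerivAt_nu x
  have h2 : HasDerivAt (fun x => nu x - x) (2 * nu x * (nu x - x) - 1) x :=
    h1.sub (hasDerivAt_id x)
  have h3 : HasDerivAt (fun x => (nu x - x)^2)
      (2 * (nu x - x) * (2 * nu x * (nu x - x) - 1)) x := by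
    have := h2.pow 2
    refine this.congr_deriv ?_
    ring
  have := h1.mul h3
  refine this.congr_deriv ?_
  ring

lemma f_deriv_neg (x : ℝ) (hx : 0 < x) :
    deriv (fun x => nu x * (nu x - x)^2) x < 0 := by
  rw [(hasDerivAt_f x).deriv]
  have h1 := nu_gt x hx
  have h2 := nu_lt x hx
  have hs0 := sqrt_pos' x
  have hs2 := sqrt_sq' x
  set s := Real.sqrt (x^2+3)
  have hU : Ub x = (2*x + s)/3 := rfl
  rw [hU] at h2
  set a := nu x
  have ha : 0 < a := hx.trans h1
  have hq : 3*a^2 - 4*a*x + x^2 - 1 < 0 := by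
    have f1 : 3*a - 2*x - s < 0 := by linarith
    have f2 : 0 < 3*a - 2*x + s := by linarith
    nlinarith [mul_neg_of_neg_of_pos f1 f2]
  have : 0 < 2 * a * (a - x) := by nlinarith
  nlinarith

lemma f_strictAnti : StrictAntiOn (fun x => nu x * (nu x - x)^2) (Set.Ioi (0:ℝ)) := by
  apply strictAntiOn_of_deriv_neg (convex_Ioi 0)
  · intro y _
    exact (hasDerivAt_f y).continuousAt.continuousWithinAt
  · rw [interior_Ioi]
    exact fun y hy => f_deriv_neg y hy

lemma f_le_f0 (x : ℝ) (hx : 0 ≤ x) :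
    nu x * (nu x - x)^2 ≤ nu 0 * (nu 0 - 0)^2 := by
  rcases eq_or_lt_of_le hx with h | h
  · rw [← h]
  · have htend : Tendsto (fun y => nu y * (nu y - y)^2) (nhdsWithin 0 (Set.Ioi 0))
        (nhds (nu 0 * (nu 0 - 0)^2)) :=
      ((hasDerivAt_f 0).continuousAt).continuousWithinAt
    apply ge_of_tendsto htend
    filter_upwards [Ioo_mem_nhdsGT_of_mem (by constructor <;> [rfl; exact h] : (0:ℝ) ∈ Set.Ico 0 x)]
      with y hy
    exact (f_strictAnti hy.1 (lt_trans hy.1 hy.2) hy.2).le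

theorem nu_localization_bound :
    StrictAntiOn (fun x => nu x * (nu x - x)^2) (Set.Ioi (0:ℝ)) ∧
    sSup ((fun x => (deriv nu x)^2 / (4 * nu x)) '' Set.Ici (0:ℝ)) = nu 0 ^ 3 ∧
    nu 0 ^ 3 = Real.pi ^ (-(3:ℝ)/2) := by
  have himg : (fun x => (deriv nu x)^2 / (4 * nu x)) '' Set.Ici (0:ℝ)
      = (fun x => nu x * (nu x - x)^2) '' Set.Ici (0:ℝ) := by
    apply Set.image_congr
    intro x _
    rw [deriv_nu x]
    have h := (nu_pos x).ne'
    field_simp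
    ring
  have hval : nu 0 * (nu 0 - 0)^2 = nu 0 ^ 3 := by ring
  refine ⟨f_strictAnti, ?_, ?_⟩
  · rw [himg]
    apply IsGreatest.csSup_eq
    constructor
    · exact ⟨0, self_mem_Ici, hval⟩
    · rintro z ⟨y, hy, rfl⟩
      rw [← hval]
      exact f_le_f0 y hy
  · rw [nu_zero, Real.sqrt_eq_rpow]
    have h1 : (Real.pi ^ ((1:ℝ)/2))⁻¹ = Real.pi ^ (-(1:ℝ)/2) := by
      rw [← Real.rpow_neg Real.pi_pos.le]
      norm_num
    rw [h1, ← Real.rpow_natCast (Real.pi ^ (-(1:ℝ)/2)) 3, ← Real.rpow_mul Real.pi_pos.le]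
    norm_num
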